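/- arXiv:2308.06669 — 3 statements merged into one kernel-verified Lean document; each statement's English description precedes it below -/
import Mathlib

section
/- Let H be a complex inner product space. Let (ψᵢ)_{i∈I} and (φⱼ)_{j∈J} be finite families of unit vectors in H, and let (aᵢ)_{i∈I} and (bⱼ)_{j∈J} be families of strictly positive real numbers with ∑ᵢ aᵢ = 1 and ∑ⱼ bⱼ = 1. If the finite-rank operators agree, i.e. for every v ∈ H, ∑ᵢ aᵢ⟨ψᵢ, v⟩ψᵢ = ∑ⱼ bⱼ⟨φⱼ, v⟩φⱼ, then the linear spans coincide: span_ℂ{ψᵢ : i ∈ I} = span_ℂ{φⱼ : j ∈ J}. -/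
open scoped InnerProductSpace BigOperators

lemma stmt1_aux {H : Type*} [NormedAddCommGroup H] [InnerProductSpace ℂ H]
    {I J : Type*} [Fintype I] [Fintype J]
    (ψ : I → H) (φ : J → H)
    (a : I → ℝ) (b : J → ℝ)
    (hb : ∀ j, 0 < b j)
    (hρ : ∀ v : H, ∑ i, (a i : ℂ) • ⟪ψ i, v⟫_ℂ • ψ i = ∑ j, (b j : ℂ) • ⟪φ j, v⟫_ℂ • φ j) :
    Submodule.span ℂ (Set.range φ) ≤ Submodule.span ℂ (Set.range ψ) := by
  have hperp : (Submodule.span ℂ (Set.range ψ))ᗮ ≤ (Submodule.span ℂ (Set.range φ))ᗮ := by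
    intro v hv
    have hψv : ∀ i, ⟪ψ i, v⟫_ℂ = 0 := fun i =>
      hv (ψ i) (Submodule.subset_span ⟨i, rfl⟩)
    have h0 : ∑ j, (b j : ℂ) • ⟪φ j, v⟫_ℂ • φ j = 0 := by
      rw [← hρ v]; simp [hψv]
    have h1 : (0 : ℂ) = ∑ j, ((b j * ‖⟪φ j, v⟫_ℂ‖ ^ 2 : ℝ) : ℂ) := by
      calc (0:ℂ) = ⟪v, (0:H)⟫_ℂ := by simp
        _ = ∑ j, ⟪v, (b j : ℂ) • ⟪φ j, v⟫_ℂ • φ j⟫_ℂ := by rw [← h0, inner_sum]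
        _ = ∑ j, ((b j * ‖⟪φ j, v⟫_ℂ‖ ^ 2 : ℝ) : ℂ) := by
            refine Finset.sum_congr rfl fun j _ => ?_
            rw [inner_smul_right, inner_smul_right, ← inner_conj_symm (φ j) v,
              RCLike.conj_mul]
            push_cast
            simp [RCLike.norm_conj, norm_inner_symm v]
    have h2 : ∑ j, b j * ‖⟪φ j, v⟫_ℂ‖ ^ 2 = 0 := by
      have h1' := h1.symm
      rw [← Complex.ofReal_sum] at h1'
      exact_mod_cast h1'
    have hterm : ∀ j, b j * ‖⟪φ j, v⟫_ℂ‖ ^ 2 = 0 := by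
      intro j
      have hnn : ∀ j ∈ Finset.univ, (0:ℝ) ≤ b j * ‖⟪φ j, v⟫_ℂ‖ ^ 2 := fun j _ =>
        mul_nonneg (hb j).le (sq_nonneg _)
      exact (Finset.sum_eq_zero_iff_of_nonneg hnn).mp h2 j (Finset.mem_univ j)
    intro u hu
    refine Submodule.span_induction (fun x hx => ?_) (by simp) (fun x y _ _ hx hy => by
      rw [inner_add_left, hx, hy, add_zero]) (fun c x _ hx => by
      rw [inner_smul_left, hx, mul_zero]) hu
    obtain ⟨j, rfl⟩ := hx
    have := hterm j
    have hb' := (hb j).ne'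
    have : ‖⟪φ j, v⟫_ℂ‖ ^ 2 = 0 := by
      rcases mul_eq_zero.mp this with h | h
      · exact absurd h hb'
      · exact h
    have : ‖⟪φ j, v⟫_ℂ‖ = 0 := by nlinarith [norm_nonneg (⟪φ j, v⟫_ℂ)]
    simpa using norm_eq_zero.mp this
  have hfin : FiniteDimensional ℂ (Submodule.span ℂ (Set.range ψ)) :=
    FiniteDimensional.span_of_finite ℂ (Set.finite_range ψ)
  calc Submodule.span ℂ (Set.range φ)
      ≤ (Submodule.span ℂ (Set.range φ))ᗮᗮ := Submodule.le_orthogonal_orthogonal _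
    _ ≤ (Submodule.span ℂ (Set.range ψ))ᗮᗮ := Submodule.orthogonal_le hperp
    _ = Submodule.span ℂ (Set.range ψ) := Submodule.orthogonal_orthogonal _

/-- If a density operator can be written as a strictly convex combination of
rank-one projections onto two finite families of unit vectors, then the spans of the two
families coincide. -/
theorem stmt1 {H : Type*} [NormedAddCommGroup H] [InnerProductSpace ℂ H]
    {I J : Type*} [Fintype I] [Fintype J]
    (ψ : I → H) (φ : J → H)
    (hψ : ∀ i, ‖ψ i‖ = 1) (hφ : ∀ j, ‖φ j‖ = 1)
    (a : I → ℝ) (b : J → ℝ)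
    (ha : ∀ i, 0 < a i) (hb : ∀ j, 0 < b j)
    (ha1 : ∑ i, a i = 1) (hb1 : ∑ j, b j = 1)
    (hρ : ∀ v : H, ∑ i, (a i : ℂ) • ⟪ψ i, v⟫_ℂ • ψ i = ∑ j, (b j : ℂ) • ⟪φ j, v⟫_ℂ • φ j) :
    Submodule.span ℂ (Set.range ψ) = Submodule.span ℂ (Set.range φ) := by
  exact le_antisymm (stmt1_aux φ ψ b a ha (fun v => (hρ v).symm))
    (stmt1_aux ψ φ a b hb hρ)
end

section
/- Let H be a complex inner product space, let ψ ∈ H be a unit vector, and let (φⱼ)_{j∈J} be a finite nonempty family of unit vectors with φⱼ ≠ ψ for all j. Then ψ lies in span_ℂ{φⱼ : j ∈ J} if and only if there exist a finite family of unit vectors (ψᵢ)_{i∈I}, an index i₀ ∈ I with ψ_{i₀} = ψ, and strictly positive reals (aᵢ)_{i∈I} and (bⱼ)_{j∈J} with ∑ᵢ aᵢ = 1 and ∑ⱼ bⱼ = 1, such that ∑ᵢ aᵢ⟨ψᵢ, v⟩ψᵢ = ∑ⱼ bⱼ⟨φⱼ, v⟩φⱼ for all v ∈ H. (Superposition is equivalent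 to non-unique decomposition of a mixed state.) -/
open scoped InnerProductSpace BigOperators

private lemma col_sum_collapse {n : ℕ} {J : Type*} [Fintype J] {M : Type*} [AddCommMonoid M]
    [Module ℂ M] (U : Matrix (Fin n) (Fin n) ℂ)
    (hU : ∀ p q, ∑ i, (starRingEnd ℂ) (U i p) * U i q = if p = q then 1 else 0)
    (σ : J → Fin n) (hσ : Function.Injective σ) (f : J → J → M) :
    ∑ i, ∑ j, ∑ k, ((starRingEnd ℂ) (U i (σ j)) * U i (σ k)) • f j k = ∑ j, f j j := by
  rw [Finset.sum_comm]
  refine Finset.sum_congr rfl fun j _ => ?_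
  rw [Finset.sum_comm]
  classical
  have h1 : ∀ k, ∑ i, ((starRingEnd ℂ) (U i (σ j)) * U i (σ k)) • f j k
      = (if j = k then (1:ℂ) else 0) • f j k := by
    intro k
    rw [← Finset.sum_smul, hU (σ j) (σ k)]
    simp [hσ.eq_iff]
  simp only [h1]
  simp

/-- Superposition is equivalent to non-unique decomposition of a mixed state:
a unit vector `ψ` lies in the span of a finite nonempty family of unit vectors `φ` (with
`φ j ≠ ψ` for all `j`) iff some density operator can be written both as a strictly convex
combination of the `φ j` and as a strictly convex combination of a family of unit vectors
containing `ψ`. -/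
theorem stmt3 {H : Type*} [NormedAddCommGroup H] [InnerProductSpace ℂ H]
    (ψ : H) (hψ : ‖ψ‖ = 1)
    {J : Type*} [Fintype J] [Nonempty J] (φ : J → H)
    (hφ : ∀ j, ‖φ j‖ = 1) (hφψ : ∀ j, φ j ≠ ψ) :
    ψ ∈ Submodule.span ℂ (Set.range φ) ↔
      ∃ (I : Type) (_ : Fintype I) (ψ' : I → H) (i₀ : I) (a : I → ℝ) (b : J → ℝ),
        (∀ i, ‖ψ' i‖ = 1) ∧ ψ' i₀ = ψ ∧
        (∀ i, 0 < a i) ∧ (∀ j, 0 < b j) ∧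
        ∑ i, a i = 1 ∧ ∑ j, b j = 1 ∧
        ∀ v : H, ∑ i, (a i : ℂ) • ⟪ψ' i, v⟫_ℂ • ψ' i = ∑ j, (b j : ℂ) • ⟪φ j, v⟫_ℂ • φ j := by
  classical
  constructor
  · -- forward direction
    intro hmem
    obtain ⟨c, hc⟩ := (Submodule.mem_span_range_iff_exists_fun ℂ).1 hmem
    set n := Fintype.card J with hn
    have hn0 : 0 < n := Fintype.card_pos
    set e := Fintype.equivFin J with he
    set S := ∑ j, Complex.normSq (c j) with hS
    have hnn : ∀ j ∈ Finset.univ, 0 ≤ Complex.normSq (c j) := fun j _ => Complex.normSq_nonneg _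
    have hS0 : 0 < S := by
      rcases lt_or_eq_of_le (Finset.sum_nonneg hnn) with h | h
      · exact h
      · exfalso
        have hz : ∀ j, c j = 0 := fun j =>
          Complex.normSq_eq_zero.1 ((Finset.sum_eq_zero_iff_of_nonneg hnn).1 h.symm j (Finset.mem_univ j))
        have : ψ = 0 := by rw [← hc]; simp [hz]
        rw [this] at hψ; simp at hψ
    set κ : ℝ := (Real.sqrt S)⁻¹ with hκdef
    have hκ : 0 < κ := inv_pos.2 (Real.sqrt_pos.2 hS0)
    set r : ℝ := (Real.sqrt n)⁻¹ with hrdef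
    have hr : 0 < r := inv_pos.2 (Real.sqrt_pos.2 (by exact_mod_cast hn0))
    have hr2 : r ^ 2 = (n : ℝ)⁻¹ := by
      rw [hrdef, inv_pow, Real.sq_sqrt (by positivity : (0:ℝ) ≤ (n:ℝ))]
    -- the unit vector u in Euclidean space
    set u : EuclideanSpace ℂ (Fin n) := WithLp.toLp 2 (fun i => (κ : ℂ) * c (e.symm i)) with hu
    have huu : ⟪u, u⟫_ℂ = 1 := by
      have : ⟪u, u⟫_ℂ = ∑ i, (starRingEnd ℂ) (u i) * u i := by
        rw [PiLp.inner_apply]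
        refine Finset.sum_congr rfl fun i _ => ?_
        rw [RCLike.inner_apply, mul_comm]
      rw [this]
      have h1 : ∀ i : Fin n, (starRingEnd ℂ) (u i) * u i
          = ((κ ^ 2 * Complex.normSq (c (e.symm i)) : ℝ) : ℂ) := by
        intro i
        simp only [hu]
        rw [map_mul, Complex.conj_ofReal]
        push_cast
        rw [Complex.normSq_eq_conj_mul_self]
        ring
      simp only [h1]
      rw [← Complex.ofReal_sum]
      norm_cast
      rw [← Finset.mul_sum, Equiv.sum_comp e.symm (fun j => Complex.normSq (c j)), ← hS]
      rw [hκdef, inv_pow, Real.sq_sqrt hS0.le]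
      field_simp
    set i₀ : Fin n := e (Classical.arbitrary J) with hi₀
    -- extend to an orthonormal basis
    have hortho : Orthonormal ℂ (Set.restrict {i₀} (fun _ : Fin n => u)) := by
      rw [orthonormal_iff_ite]
      rintro ⟨i, hi⟩ ⟨j, hj⟩
      simp only [Set.mem_singleton_iff] at hi hj
      subst hi; subst hj
      show ⟪u, u⟫_ℂ = if _ then _ else _
      rw [if_pos rfl]
      exact huu
    obtain ⟨b, hbex⟩ := Orthonormal.exists_orthonormalBasis_extension_of_card_eq
      (𝕜 := ℂ) (by simp) hortho
    have hbu : b i₀ = u := hbex i₀ rfl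
    set U : Matrix (Fin n) (Fin n) ℂ := Matrix.of (fun i j => b i j) with hU
    have hrow : ∀ i i', ∑ j, (starRingEnd ℂ) (U i j) * U i' j = if i = i' then 1 else 0 := by
      intro i i'
      have := (orthonormal_iff_ite).1 b.orthonormal i i'
      rw [PiLp.inner_apply] at this
      simpa [RCLike.inner_apply, hU, mul_comm] using this
    have hUU : U * U.conjTranspose = 1 := by
      ext i i'
      rw [Matrix.mul_apply, Matrix.one_apply]
      have : ∑ j, U i j * (starRingEnd ℂ) (U i' j)
          = (starRingEnd ℂ) (∑ j, (starRingEnd ℂ) (U i j) * U i' j) := by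
        rw [map_sum]; refine Finset.sum_congr rfl fun j _ => ?_; rw [map_mul]; simp [mul_comm]
      simp only [Matrix.conjTranspose_apply, RCLike.star_def]
      rw [this, hrow i i']
      split <;> simp
    have hcol : ∀ p q, ∑ i, (starRingEnd ℂ) (U i p) * U i q = if p = q then 1 else 0 := by
      intro p q
      have h1 : U.conjTranspose * U = 1 := mul_eq_one_comm.1 hUU
      have h2 := congrFun (congrFun (congrArg (fun M => (M : Matrix (Fin n) (Fin n) ℂ)) h1) p) q
      simp only [Matrix.mul_apply, Matrix.conjTranspose_apply, Matrix.one_apply,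
        RCLike.star_def] at h2
      exact h2
    set x : J → H := fun j => (r : ℂ) • φ j with hx
    set y : Fin n → H := fun i => ∑ j, U i (e j) • x j with hy
    set t : ℝ := κ * r with ht
    have ht0 : 0 < t := mul_pos hκ hr
    have hyi₀ : y i₀ = ((t : ℝ) : ℂ) • ψ := by
      rw [hy]
      simp only
      have hUi₀ : ∀ j, U i₀ (e j) = (κ : ℂ) * c j := by
        intro j
        simp [hU, hbu, hu]
      have : ∀ j : J, U i₀ (e j) • x j = ((t:ℝ):ℂ) • (c j • φ j) := by
        intro j
        rw [hUi₀ j, hx]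
        simp only [smul_smul]
        congr 1
        push_cast [ht]
        ring
      rw [Finset.sum_congr rfl (fun j _ => this j), ← Finset.smul_sum, hc]
    have hψne : ψ ≠ 0 := by intro h; rw [h] at hψ; simp at hψ
    have htC : ((t:ℝ):ℂ) ≠ 0 := by exact_mod_cast ht0.ne'
    have hyi₀ne : y i₀ ≠ 0 := by rw [hyi₀]; exact smul_ne_zero htC hψne
    -- key identities
    have key1 : ∀ v : H, ∑ i, ⟪y i, v⟫_ℂ • y i = ∑ j, ⟪x j, v⟫_ℂ • x j := by
      intro v
      have expand : ∀ i, ⟪y i, v⟫_ℂ • y i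
          = ∑ j, ∑ k, ((starRingEnd ℂ) (U i (e j)) * U i (e k)) • (⟪x j, v⟫_ℂ • x k) := by
        intro i
        rw [show y i = ∑ j, U i (e j) • x j from rfl]
        rw [sum_inner, Finset.sum_smul]
        refine Finset.sum_congr rfl fun j _ => ?_
        rw [inner_smul_left, Finset.smul_sum]
        refine Finset.sum_congr rfl fun k _ => ?_
        match_scalars
        ring
      rw [Finset.sum_congr rfl (fun i _ => expand i)]
      exact col_sum_collapse U hcol e e.injective _
    have key2 : ∑ i, ⟪y i, y i⟫_ℂ = ∑ j, ⟪x j, x j⟫_ℂ := by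
      have expand2 : ∀ i, ⟪y i, y i⟫_ℂ
          = ∑ j, ∑ k, ((starRingEnd ℂ) (U i (e j)) * U i (e k)) • ⟪x j, x k⟫_ℂ := by
        intro i
        conv_lhs => rw [show y i = ∑ j, U i (e j) • x j from rfl]
        rw [sum_inner]
        refine Finset.sum_congr rfl fun j _ => ?_
        rw [inner_smul_left, inner_sum, Finset.mul_sum]
        refine Finset.sum_congr rfl fun k _ => ?_
        rw [inner_smul_right, smul_eq_mul]
        ring
      rw [Finset.sum_congr rfl (fun i _ => expand2 i)]
      exact col_sum_collapse U hcol e e.injective _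
    have hxx : ∀ j, ⟪x j, x j⟫_ℂ = (((n:ℝ)⁻¹ : ℝ) : ℂ) := by
      intro j
      rw [hx]
      simp only [inner_smul_left, inner_smul_right, Complex.conj_ofReal]
      rw [inner_self_eq_norm_sq_to_K, hφ j]
      push_cast [← hr2]
      ring
    have hsum_norm : ∑ i : Fin n, ‖y i‖ ^ 2 = 1 := by
      have h1 : ∀ i : Fin n, ⟪y i, y i⟫_ℂ = ((‖y i‖ ^ 2 : ℝ) : ℂ) := by
        intro i; rw [inner_self_eq_norm_sq_to_K]; norm_cast
      have h2 : ((∑ i : Fin n, ‖y i‖ ^ 2 : ℝ) : ℂ) = ((1 : ℝ) : ℂ) := by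
        push_cast
        rw [show ∑ i : Fin n, (‖y i‖:ℂ) ^ 2 = ∑ i, ⟪y i, y i⟫_ℂ from
          (Finset.sum_congr rfl fun i _ => by rw [h1 i]; push_cast; ring).symm]
        rw [key2, Finset.sum_congr rfl (fun j _ => hxx j)]
        rw [Finset.sum_const, Finset.card_univ]
        push_cast
        rw [nsmul_eq_mul]
        push_cast
        rw [mul_inv_cancel₀ (by exact_mod_cast hn0.ne' : ((n:ℕ):ℂ) ≠ 0)]
      exact_mod_cast h2
    haveI : DecidablePred (fun i : Fin n => y i ≠ 0) := fun _ => Classical.dec _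
    haveI hfin : Fintype {i : Fin n // y i ≠ 0} := Subtype.fintype _
    -- the subtype of nonzero y's
    refine ⟨{i : Fin n // y i ≠ 0}, inferInstance,
      fun i => ((‖y i.1‖ : ℝ) : ℂ)⁻¹ • y i.1, ⟨i₀, hyi₀ne⟩,
      fun i => ‖y i.1‖ ^ 2, fun _ => (n : ℝ)⁻¹, ?_, ?_, ?_, ?_, ?_, ?_, ?_⟩
    · intro i
      rw [norm_smul]
      have h0 : ‖y i.1‖ ≠ 0 := norm_ne_zero_iff.2 i.2
      simp [h0]
    · show ((‖y i₀‖ : ℝ) : ℂ)⁻¹ • y i₀ = ψ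
      have : ‖((t:ℝ):ℂ) • ψ‖ = t := by
        rw [norm_smul, hψ, Complex.norm_real, Real.norm_eq_abs, abs_of_pos ht0, mul_one]
      rw [show ‖y i₀‖ = t by rw [hyi₀]; exact this, hyi₀, smul_smul]
      rw [← Complex.ofReal_inv, ← Complex.ofReal_mul, inv_mul_cancel₀ ht0.ne']
      simp
    · intro i
      have h0 : ‖y i.1‖ ≠ 0 := norm_ne_zero_iff.2 i.2
      positivity
    · intro j
      positivity
    · -- sum of a
      have h1 := Finset.sum_subtype (p := fun i : Fin n => y i ≠ 0) (F := hfin)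
        (Finset.univ.filter (fun i : Fin n => y i ≠ 0)) (fun i => by simp)
        (fun i => ‖y i‖ ^ 2)
      rw [← h1, Finset.sum_filter_of_ne, hsum_norm]
      intro i _ hne
      intro h0
      apply hne
      rw [h0]
      simp
    · rw [Finset.sum_const, Finset.card_univ, hn, nsmul_eq_mul,
        mul_inv_cancel₀ (by exact_mod_cast hn0.ne' : ((Fintype.card J : ℕ):ℝ) ≠ 0)]
    · intro v
      have hterm : ∀ i : {i : Fin n // y i ≠ 0},
          ((‖y i.1‖ ^ 2 : ℝ) : ℂ) • ⟪((‖y i.1‖ : ℝ) : ℂ)⁻¹ • y i.1, v⟫_ℂ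
            • (((‖y i.1‖ : ℝ) : ℂ)⁻¹ • y i.1) = ⟪y i.1, v⟫_ℂ • y i.1 := by
        intro i
        have h0 : ((‖y i.1‖ : ℝ) : ℂ) ≠ 0 := by
          exact_mod_cast norm_ne_zero_iff.2 i.2
        rw [inner_smul_left, map_inv₀, Complex.conj_ofReal]
        match_scalars
        push_cast
        field_simp
      rw [Finset.sum_congr rfl (fun i _ => hterm i)]
      have h1 : ∑ i : {i : Fin n // y i ≠ 0}, ⟪y i.1, v⟫_ℂ • y i.1
          = ∑ i : Fin n, ⟪y i, v⟫_ℂ • y i := by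
        have h2 := Finset.sum_subtype (p := fun i : Fin n => y i ≠ 0) (F := hfin)
          (Finset.univ.filter (fun i : Fin n => y i ≠ 0)) (fun i => by simp)
          (fun i => ⟪y i, v⟫_ℂ • y i)
        rw [← h2, Finset.sum_filter_of_ne]
        intro i _ hne h0
        apply hne
        rw [h0]
        simp
      rw [h1, key1 v]
      refine Finset.sum_congr rfl fun j _ => ?_
      rw [hx]
      simp only [inner_smul_left, inner_smul_right, Complex.conj_ofReal, smul_smul]
      congr 1
      push_cast [← hr2]
      ring
  · -- reverse direction
    rintro ⟨I, _, ψ', i₀, a, b, hψ'n, hψ'i₀, ha, hb, hsa, hsb, heq⟩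
    set K := Submodule.span ℂ (Set.range φ) with hK
    haveI : FiniteDimensional ℂ K := FiniteDimensional.span_of_finite ℂ (Set.finite_range φ)
    set q : H := ψ - (K.orthogonalProjectionOnto ψ : H) with hq
    have hqK : q ∈ Kᗮ := K.sub_starProjection_mem_orthogonal ψ
    have hφq : ∀ j, ⟪φ j, q⟫_ℂ = 0 := fun j =>
      hqK (φ j) (Submodule.subset_span (Set.mem_range_self j))
    have h0 : ∑ i, (a i : ℂ) • ⟪ψ' i, q⟫_ℂ • ψ' i = 0 := by
      rw [heq q]
      refine Finset.sum_eq_zero fun j _ => ?_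
      rw [hφq j]
      simp
    have h1 : ∑ i, (a i : ℝ) * Complex.normSq ⟪ψ' i, q⟫_ℂ = 0 := by
      have h2 : ⟪q, ∑ i, (a i : ℂ) • ⟪ψ' i, q⟫_ℂ • ψ' i⟫_ℂ = 0 := by rw [h0]; simp
      rw [inner_sum] at h2
      have h3 : ∀ i, ⟪q, (a i : ℂ) • ⟪ψ' i, q⟫_ℂ • ψ' i⟫_ℂ
          = ((a i * Complex.normSq ⟪ψ' i, q⟫_ℂ : ℝ) : ℂ) := by
        intro i
        rw [inner_smul_right, inner_smul_right]
        rw [show ⟪q, ψ' i⟫_ℂ = (starRingEnd ℂ) ⟪ψ' i, q⟫_ℂ from (inner_conj_symm _ _).symm]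
        rw [mul_comm ⟪ψ' i, q⟫_ℂ, ← Complex.normSq_eq_conj_mul_self]
        push_cast
        ring
      rw [Finset.sum_congr rfl (fun i _ => h3 i)] at h2
      rw [← Complex.ofReal_sum] at h2
      exact_mod_cast h2
    have h4 : ⟪ψ' i₀, q⟫_ℂ = 0 := by
      have hnn : ∀ i ∈ Finset.univ, (0:ℝ) ≤ a i * Complex.normSq ⟪ψ' i, q⟫_ℂ :=
        fun i _ => mul_nonneg (ha i).le (Complex.normSq_nonneg _)
      have := (Finset.sum_eq_zero_iff_of_nonneg hnn).1 h1 i₀ (Finset.mem_univ i₀)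
      have h5 : Complex.normSq ⟪ψ' i₀, q⟫_ℂ = 0 := by
        rcases mul_eq_zero.1 this with h | h
        · exact absurd h (ha i₀).ne'
        · exact h
      exact Complex.normSq_eq_zero.1 h5
    rw [hψ'i₀] at h4
    have h6 : ⟪ψ, q⟫_ℂ = ⟪q, q⟫_ℂ := by
      have : ψ = (K.orthogonalProjectionOnto ψ : H) + q := by rw [hq]; abel
      conv_lhs => rw [this]
      rw [inner_add_left]
      rw [hqK (K.orthogonalProjectionOnto ψ : H) (K.orthogonalProjectionOnto ψ).2]
      ring
    have h7 : q = 0 := by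
      have := h6.symm.trans h4
      exact inner_self_eq_zero.1 this
    have : ψ = (K.orthogonalProjectionOnto ψ : H) := by
      have := sub_eq_zero.1 (hq ▸ h7)
      exact this
    rw [this]
    exact (K.orthogonalProjectionOnto ψ).2
end

section
/- Let f : ℝ → ℂ be Lebesgue integrable. If f has compact support and its Fourier transform 𝓕f (defined by (𝓕f)(ξ) = ∫_ℝ e^{−2πi x ξ} f(x) dx) also has compact support, then f = 0 almost everywhere. That is, a nonzero state cannot have compact support in both position and momentum representation. -/
open MeasureTheory FourierTransform Complex Filter
open scoped FourierTransform Real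

set_option maxHeartbeats 1000000 in
/-- The Fourier transform of a compactly supported integrable function extends to an
entire function. -/
lemma entire_ext (f : ℝ → ℂ) (hf : Integrable f volume) (R : ℝ)
    (hsup : ∀ x : ℝ, R < |x| → f x = 0) :
    ∃ F : ℂ → ℂ, Differentiable ℂ F ∧ ∀ w : ℝ, F w = 𝓕 f w := by
  set F : ℂ → ℂ := fun z => ∫ x : ℝ, Complex.exp (-(2 * π * x) * Complex.I * z) * f x with hF
  have habs : ∀ (c : ℝ) (z : ℂ), ‖Complex.exp (-(2 * π * c) * Complex.I * z)‖
      = Real.exp (2 * π * c * z.im) := by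
    intro c z
    rw [Complex.norm_exp]
    congr 1
    simp [Complex.mul_re, Complex.mul_im]
  have hexp_bound : ∀ (x : ℝ) (z : ℂ) (B : ℝ), |x| ≤ R → ‖z‖ ≤ B →
      Real.exp (2 * π * x * z.im) ≤ Real.exp (2 * π * (|R| + 1) * B) := by
    intro x z B hx hz
    have hB : 0 ≤ B := (norm_nonneg z).trans hz
    apply Real.exp_le_exp.2
    have h3 : |z.im| ≤ B := (Complex.abs_im_le_norm z).trans hz
    have h4 : |x| ≤ |R| + 1 := hx.trans (by linarith [le_abs_self R])
    calc 2 * π * x * z.im ≤ |2 * π * x * z.im| := le_abs_self _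
      _ = (2 * π) * |x| * |z.im| := by
          rw [abs_mul, abs_mul, _root_.abs_of_nonneg (by positivity : (0:ℝ) ≤ 2 * π)]
      _ ≤ 2 * π * (|R| + 1) * B := by
          apply mul_le_mul (mul_le_mul_of_nonneg_left h4 (by positivity)) h3 (abs_nonneg _)
          positivity
  have hAESM : ∀ z : ℂ, AEStronglyMeasurable
      (fun x : ℝ => Complex.exp (-(2 * π * x) * Complex.I * z) * f x) volume := by
    intro z
    exact (Continuous.aestronglyMeasurable (by fun_prop)).mul hf.1
  have hAESM' : ∀ z : ℂ, AEStronglyMeasurable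
      (fun x : ℝ => (-(2 * π * x) * Complex.I) *
        Complex.exp (-(2 * π * x) * Complex.I * z) * f x) volume := by
    intro z
    exact (Continuous.aestronglyMeasurable (by fun_prop)).mul hf.1
  refine ⟨F, ?_, ?_⟩
  · intro z₀
    set C : ℝ := 2 * π * (|R| + 1) * Real.exp (2 * π * (|R| + 1) * (‖z₀‖ + 1)) with hC
    have key := hasDerivAt_integral_of_dominated_loc_of_deriv_le
      (F := fun z (x : ℝ) => Complex.exp (-(2 * π * x) * Complex.I * z) * f x)
      (F' := fun z (x : ℝ) => (-(2 * π * x) * Complex.I) *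
        Complex.exp (-(2 * π * x) * Complex.I * z) * f x)
      (x₀ := z₀) (bound := fun x => C * ‖f x‖) (μ := volume) (s := Metric.ball z₀ 1) (Metric.ball_mem_nhds z₀ one_pos)
      ?_ ?_ ?_ ?_ ?_ ?_
    · exact key.2.differentiableAt
    · filter_upwards with z; exact hAESM z
    · -- integrability at z₀
      apply Integrable.mono' (hf.norm.const_mul (Real.exp (2 * π * (|R| + 1) * (‖z₀‖ + 1))))
        (hAESM z₀)
      filter_upwards with x
      rw [norm_mul, habs]
      by_cases hx : f x = 0
      · rw [hx]; simp
      · have hxR : |x| ≤ R := by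
          by_contra h
          exact hx (hsup x (lt_of_not_ge h))
        apply mul_le_mul_of_nonneg_right _ (norm_nonneg _)
        exact hexp_bound x z₀ (‖z₀‖ + 1) hxR (by linarith [norm_nonneg z₀])
    · exact hAESM' z₀
    · -- bound
      filter_upwards with x z hz
      rw [norm_mul, norm_mul, habs]
      by_cases hx : f x = 0
      · rw [hx]; simp
      · have hxR : |x| ≤ R := by
          by_contra h
          exact hx (hsup x (lt_of_not_ge h))
        apply mul_le_mul_of_nonneg_right _ (norm_nonneg _)
        have h1 : ‖-(2 * (π:ℂ) * (x:ℂ)) * Complex.I‖ = 2 * π * |x| := by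
          rw [norm_mul, Complex.norm_I, mul_one, norm_neg]
          have h2 : (2 : ℂ) * ↑π * (x:ℂ) = ((2 * π * x : ℝ) : ℂ) := by push_cast; ring
          rw [h2, Complex.norm_real, Real.norm_eq_abs, abs_mul,
            _root_.abs_of_nonneg (by positivity : (0:ℝ) ≤ 2 * π)]
        rw [h1, hC]
        have hz' : ‖z‖ ≤ ‖z₀‖ + 1 := by
          have h5 := mem_ball_iff_norm.1 hz
          have h6 : ‖z‖ - ‖z₀‖ ≤ ‖z - z₀‖ := norm_sub_norm_le z z₀
          linarith
        apply mul_le_mul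
        · have h7 : |x| ≤ |R| + 1 := hxR.trans (by linarith [le_abs_self R])
          have h2π : (0:ℝ) ≤ 2 * π := by positivity
          nlinarith [Real.pi_pos]
        · exact hexp_bound x z (‖z₀‖ + 1) hxR hz'
        · positivity
        · positivity
    · exact hf.norm.const_mul C
    · -- differentiability of integrand
      filter_upwards with x z _
      have h : HasDerivAt (fun z : ℂ => Complex.exp (-(2 * π * x) * Complex.I * z))
          (Complex.exp (-(2 * π * x) * Complex.I * z) * (-(2 * π * x) * Complex.I)) z := by
        simpa using ((hasDerivAt_id z).const_mul (-(2 * (π:ℂ) * x) * Complex.I)).cexp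
      rw [show (-(2 * (π:ℂ) * x) * Complex.I) * Complex.exp (-(2 * (π:ℂ) * x) * Complex.I * z) * f x
        = Complex.exp (-(2 * (π:ℂ) * x) * Complex.I * z) * (-(2 * (π:ℂ) * x) * Complex.I) * f x from by ring]
      exact h.mul_const (f x)
  · intro w
    rw [Real.fourier_real_eq_integral_exp_smul, hF]
    refine integral_congr_ae (Filter.Eventually.of_forall fun x => ?_)
    simp only [smul_eq_mul]
    congr 1
    push_cast
    ring

/-- An integrable function `f : ℝ → ℂ` with compact support whose Fourier
transform also has compact support vanishes almost everywhere. -/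
theorem stmt17 (f : ℝ → ℂ) (hf : Integrable f volume)
    (hsupp : HasCompactSupport f)
    (hfourier : HasCompactSupport (𝓕 f)) :
    f =ᵐ[volume] 0 := by
  -- Step 0: supports in balls
  obtain ⟨R, hR⟩ := hsupp.isCompact.isBounded.subset_closedBall 0
  obtain ⟨S, hS⟩ := hfourier.isCompact.isBounded.subset_closedBall 0
  have hfz : ∀ x : ℝ, R < |x| → f x = 0 := by
    intro x hx
    apply image_eq_zero_of_notMem_tsupport
    intro hmem
    have := hR hmem
    simp [Metric.mem_closedBall, Real.dist_eq] at this
    linarith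
  have hFz : ∀ w : ℝ, S < |w| → 𝓕 f w = 0 := by
    intro w hw
    apply image_eq_zero_of_notMem_tsupport
    intro hmem
    have := hS hmem
    simp [Metric.mem_closedBall, Real.dist_eq] at this
    linarith
  -- Step 1: 𝓕 f ≡ 0
  obtain ⟨F, hFdiff, hFeq⟩ := entire_ext f hf R hfz
  have hFzero : ∀ w : ℝ, 𝓕 f w = 0 := by
    have hAn : AnalyticOnNhd ℂ F Set.univ := analyticOnNhd_univ_iff_differentiable.2 hFdiff
    set z₀ : ℂ := ((|S| + 1 : ℝ) : ℂ) with hz₀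
    have hfreq : ∃ᶠ z in nhdsWithin z₀ {z₀}ᶜ, F z = 0 := by
      have hu : Tendsto (fun n : ℕ => ((|S| + 1 + 1/(n+1) : ℝ) : ℂ)) atTop
          (nhdsWithin z₀ {z₀}ᶜ) := by
        apply tendsto_nhdsWithin_of_tendsto_nhds_of_eventually_within
        · rw [hz₀]
          apply Tendsto.comp (Complex.continuous_ofReal.tendsto _)
          have h0 : Tendsto (fun n : ℕ => 1/((n:ℝ)+1)) atTop (nhds 0) :=
            tendsto_one_div_add_atTop_nhds_zero_nat
          simpa using (tendsto_const_nhds (x := |S| + 1) (f := atTop)).add h0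
        · filter_upwards with n
          simp only [Set.mem_compl_iff, Set.mem_singleton_iff, hz₀]
          intro h
          have := Complex.ofReal_injective h
          have hpos : (0:ℝ) < 1/((n:ℝ)+1) := by positivity
          linarith
      apply hu.frequently
      apply Filter.Frequently.of_forall
      intro n
      rw [hFeq]
      apply hFz
      have hpos : (0:ℝ) < 1/((n:ℝ)+1) := by positivity
      have hSa : S ≤ |S| := le_abs_self S
      rw [_root_.abs_of_pos (by positivity)]
      linarith
    have := hAn.eqOn_zero_of_preconnected_of_frequently_eq_zero
      isPreconnected_univ (Set.mem_univ z₀) hfreq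
    intro w
    rw [← hFeq w]
    exact this (Set.mem_univ _)
  -- Step 2: conclude f = 0 a.e. using test functions
  apply ae_eq_zero_of_integral_contDiff_smul_eq_zero hf.locallyIntegrable
  intro g hg hgsupp
  -- build the Schwartz map with values (g x : ℂ)
  have hgc : ContDiff ℝ ((⊤ : ℕ∞) : WithTop ℕ∞) (fun x : ℝ => (g x : ℂ)) :=
    Complex.ofRealCLM.contDiff.comp hg
  have hgcsupp : HasCompactSupport (fun x : ℝ => (g x : ℂ)) :=
    hgsupp.comp_left (g := fun r : ℝ => (r : ℂ)) (by simp)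
  set G : SchwartzMap ℝ ℂ := {
    toFun := fun x => (g x : ℂ)
    smooth' := hgc
    decay' := by
      intro k n
      have hcont : Continuous (fun x : ℝ => ‖x‖ ^ k * ‖iteratedFDeriv ℝ n (fun x : ℝ => (g x : ℂ)) x‖) := by
        apply Continuous.mul (by fun_prop)
        exact (hgc.continuous_iteratedFDeriv (by exact_mod_cast le_top)).norm
      have hsupp' : HasCompactSupport (fun x : ℝ => ‖x‖ ^ k * ‖iteratedFDeriv ℝ n (fun x : ℝ => (g x : ℂ)) x‖) := by
        apply HasCompactSupport.mul_left
        exact (hgcsupp.iteratedFDeriv n).norm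
      obtain ⟨C, hC⟩ := hcont.bounded_above_of_compact_support hsupp'
      refine ⟨C, fun x => ?_⟩
      have h8 := hC x
      rwa [Real.norm_eq_abs, _root_.abs_of_nonneg (by positivity)] at h8 } with hG
  set h := (SchwartzMap.fourierTransformCLE ℂ (SchwartzMap ℝ ℂ)).symm G with hh
  have hFh : 𝓕 (⇑h) = ⇑G := by
    have h9 : SchwartzMap.fourierTransformCLE ℂ (SchwartzMap ℝ ℂ) h = G :=
      (SchwartzMap.fourierTransformCLE ℂ (SchwartzMap ℝ ℂ)).apply_symm_apply G
    rw [← SchwartzMap.fourier_coe, ← SchwartzMap.fourierTransformCLE_apply (R := ℂ) h]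
    exact congrArg DFunLike.coe h9
  -- multiplication formula
  have hflip : (innerₗ ℝ).flip = innerₗ ℝ := by
    apply LinearMap.ext; intro x; apply LinearMap.ext; intro y
    exact real_inner_comm x y
  have hmul := VectorFourier.integral_fourierIntegral_smul_eq_flip
    (e := Real.fourierChar) (L := innerₗ ℝ) (μ := volume) (ν := volume)
    (f := f) (g := ⇑h) Real.continuous_fourierChar continuous_inner hf h.integrable
  rw [hflip] at hmul
  have hLHS : ∫ ξ : ℝ, (VectorFourier.fourierIntegral Real.fourierChar volume (innerₗ ℝ) f ξ) • (h ξ) = 0 := by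
    apply integral_eq_zero_of_ae
    filter_upwards with ξ
    have h10 : VectorFourier.fourierIntegral Real.fourierChar volume (innerₗ ℝ) f ξ = 𝓕 f ξ := rfl
    rw [Pi.zero_apply, h10, hFzero ξ, zero_smul]
  rw [hLHS] at hmul
  have hRHS : ∫ x : ℝ, f x • (VectorFourier.fourierIntegral Real.fourierChar volume (innerₗ ℝ) (⇑h) x) = ∫ x : ℝ, f x * (g x : ℂ) := by
    congr 1
    ext x
    have h11 : VectorFourier.fourierIntegral Real.fourierChar volume (innerₗ ℝ) (⇑h) x = 𝓕 (⇑h) x := rfl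
    rw [smul_eq_mul, h11, hFh]
    rfl
  rw [hRHS] at hmul
  calc ∫ x : ℝ, g x • f x = ∫ x : ℝ, f x * (g x : ℂ) := by
        congr 1; ext x; rw [Complex.real_smul, mul_comm]
    _ = 0 := hmul.symm
end
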